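/- (Commutativity of the two Euclidean parametrizations: φ ∘ F_D = F_L.) Let E = EuclideanSpace ℝ (Fin n) and let z ∈ E with z ≠ 0. Then φ(F_D(z)) = (Real.cosh ‖z‖, (Real.sinh ‖z‖/‖z‖) • z); explicitly, writing x := (Real.tanh (‖z‖/2)/‖z‖) • z, one has (1 + ‖x‖²)/(1 - ‖x‖²) = Real.cosh ‖z‖ and (2/(1 - ‖x‖²)) • x = (Real.sinh ‖z‖/‖z‖) • z. -/

import Mathlib

open RealInnerProductSpace

/-- The transition map from the Poincaré ball to the Lorentz model. -/
noncomputable def phi {n : ℕ} (x : EuclideanSpace ℝ (Fin n)) : ℝ × EuclideanSpace ℝ (Fin n) :=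
  ((1 + ‖x‖ ^ 2) / (1 - ‖x‖ ^ 2), (2 / (1 - ‖x‖ ^ 2)) • x)

/-- The Euclidean parametrization of the Poincaré ball, `F_D(z) = (tanh(‖z‖/2)/‖z‖) • z`
(which equals `0` at `z = 0`). -/
noncomputable def FD {n : ℕ} (z : EuclideanSpace ℝ (Fin n)) : EuclideanSpace ℝ (Fin n) :=
  (Real.tanh (‖z‖ / 2) / ‖z‖) • z

theorem phi_comp_FD_eq_FL (n : ℕ) (z : EuclideanSpace ℝ (Fin n)) (hz : z ≠ 0) :
    phi (FD z) = (Real.cosh ‖z‖, (Real.sinh ‖z‖ / ‖z‖) • z) ∧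
    (1 + ‖(Real.tanh (‖z‖ / 2) / ‖z‖) • z‖ ^ 2) / (1 - ‖(Real.tanh (‖z‖ / 2) / ‖z‖) • z‖ ^ 2) =
      Real.cosh ‖z‖ ∧
    (2 / (1 - ‖(Real.tanh (‖z‖ / 2) / ‖z‖) • z‖ ^ 2)) • ((Real.tanh (‖z‖ / 2) / ‖z‖) • z) =
      (Real.sinh ‖z‖ / ‖z‖) • z := by
  have hr : (0:ℝ) < ‖z‖ := norm_pos_iff.mpr hz
  set r := ‖z‖ with hrdef
  have htanh : Real.tanh (r / 2) = Real.sinh (r / 2) / Real.cosh (r / 2) :=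
    Real.tanh_eq_sinh_div_cosh _
  have hc : 0 < Real.cosh (r / 2) := Real.cosh_pos _
  have ht0 : 0 ≤ Real.tanh (r / 2) := by
    rw [htanh]
    exact div_nonneg (Real.sinh_nonneg_iff.mpr (by positivity)) hc.le
  have hn : ‖(Real.tanh (r / 2) / r) • z‖ = Real.tanh (r / 2) := by
    rw [norm_smul, Real.norm_eq_abs, abs_div, abs_of_nonneg ht0, abs_of_pos hr, ← hrdef,
      div_mul_cancel₀ _ hr.ne']
  have hcs : Real.cosh (r / 2) ^ 2 - Real.sinh (r / 2) ^ 2 = 1 := Real.cosh_sq_sub_sinh_sq _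
  have hcoshr : Real.cosh r = Real.cosh (r / 2) ^ 2 + Real.sinh (r / 2) ^ 2 := by
    have := Real.cosh_add (r / 2) (r / 2)
    rw [add_halves] at this
    rw [this]; ring
  have hsinhr : Real.sinh r = 2 * Real.sinh (r / 2) * Real.cosh (r / 2) := by
    have := Real.sinh_add (r / 2) (r / 2)
    rw [add_halves] at this
    rw [this]; ring
  have hden : (1:ℝ) - (Real.sinh (r / 2) / Real.cosh (r / 2)) ^ 2
      = 1 / Real.cosh (r / 2) ^ 2 := by
    rw [div_pow]
    field_simp
    exact hcs
  have h1 : (1 + ‖(Real.tanh (r / 2) / r) • z‖ ^ 2) / (1 - ‖(Real.tanh (r / 2) / r) • z‖ ^ 2)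
      = Real.cosh r := by
    rw [hn, htanh, hcoshr, hden, div_pow]
    field_simp
  have h2 : (2 / (1 - ‖(Real.tanh (r / 2) / r) • z‖ ^ 2)) • ((Real.tanh (r / 2) / r) • z)
      = (Real.sinh r / r) • z := by
    rw [smul_smul]
    congr 1
    rw [hn, htanh, hsinhr, hden]
    field_simp
  exact ⟨by simp only [phi, FD, ← hrdef, h1, h2], h1, h2⟩
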